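/- arXiv:math/0008220 — 4 statements merged into one kernel-verified Lean document; each statement's English description precedes it below -/
import Mathlib

section
/- For any two lattice points u, v in Z^2, the minimal length of an increasing lattice path from u to v differs by at most 1 from twice the sup-norm distance between u and v. -/
/-- The directed edge from `u` to `v` (a unit step in `ℤ × ℤ`) has a black
square on its left, where the unit square with lower-left corner `(x, y)` is
colored black iff `x + y` is odd.  An *increasing path* is a lattice path all
of whose steps satisfy this condition. -/
def blackLeft (u v : ℤ × ℤ) : Prop :=
  (Odd (u.1 + u.2) ∧ (v = (u.1 + 1, u.2) ∨ v = (u.1 - 1, u.2))) ∨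
  (Even (u.1 + u.2) ∧ (v = (u.1, u.2 + 1) ∨ v = (u.1, u.2 - 1)))

/-- The set of lengths of increasing lattice paths from `u` to `v`
(paths are not restricted to lie in any region). -/
def incPathLengths (u v : ℤ × ℤ) : Set ℕ :=
  {n | ∃ p : ℕ → ℤ × ℤ, p 0 = u ∧ p n = v ∧
    ∀ i < n, blackLeft (p i) (p (i + 1))}

lemma mem_zero (u : ℤ × ℤ) : 0 ∈ incPathLengths u u :=
  ⟨fun _ => u, rfl, rfl, fun i hi => absurd hi (Nat.not_lt_zero i)⟩

lemma mem_one {u v : ℤ × ℤ} (h : blackLeft u v) : 1 ∈ incPathLengths u v := by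
  refine ⟨fun i => if i = 0 then u else v, by simp, by simp, ?_⟩
  intro i hi
  interval_cases i
  simpa using h

lemma mem_add {u w v : ℤ × ℤ} {m n : ℕ} (h1 : m ∈ incPathLengths u w)
    (h2 : n ∈ incPathLengths w v) : m + n ∈ incPathLengths u v := by
  obtain ⟨p, hp0, hpm, hps⟩ := h1
  obtain ⟨q, hq0, hqn, hqs⟩ := h2
  refine ⟨fun i => if i < m then p i else q (i - m), ?_, ?_, ?_⟩
  · by_cases h : 0 < m
    · simp only [if_pos h]; exact hp0
    · have hm : m = 0 := by omega
      subst hm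
      have huw : u = w := by rw [← hp0, hpm]
      simp [hq0, huw]
  · simp only [if_neg (by omega : ¬ m + n < m)]
    rw [Nat.add_sub_cancel_left, hqn]
  · intro i hi
    by_cases h : i + 1 < m
    · simp only [if_pos h, if_pos (by omega : i < m)]
      exact hps i (by omega)
    · by_cases h' : i < m
      · have hieq : i + 1 = m := by omega
        simp only [if_pos h', if_neg h]
        have : q (i + 1 - m) = p (i + 1) := by
          rw [show i + 1 - m = 0 from by omega, hq0, ← hpm, hieq]
        rw [this]
        exact hps i h'
      · simp only [if_neg h, if_neg h']
        rw [show i + 1 - m = (i - m) + 1 from by omega]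
        exact hqs (i - m) (by omega)

lemma mem_diag (u : ℤ × ℤ) (e1 e2 : ℤ) (h1 : e1 = 1 ∨ e1 = -1)
    (h2 : e2 = 1 ∨ e2 = -1) : 2 ∈ incPathLengths u (u.1 + e1, u.2 + e2) := by
  rcases Int.even_or_odd (u.1 + u.2) with he | ho
  · have s1 : blackLeft u (u.1, u.2 + e2) := by
      refine Or.inr ⟨he, ?_⟩
      rcases h2 with rfl | rfl
      · left; rfl
      · right; simp [sub_eq_add_neg]
    have s2 : blackLeft (u.1, u.2 + e2) (u.1 + e1, u.2 + e2) := by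
      obtain ⟨k, hk⟩ := he
      refine Or.inl ⟨?_, ?_⟩
      · rcases h2 with rfl | rfl
        · exact ⟨k, by omega⟩
        · exact ⟨k - 1, by omega⟩
      · rcases h1 with rfl | rfl
        · left; rfl
        · right; simp [sub_eq_add_neg]
    have := mem_add (mem_one s1) (mem_one s2)
    simpa using this
  · have s1 : blackLeft u (u.1 + e1, u.2) := by
      refine Or.inl ⟨ho, ?_⟩
      rcases h1 with rfl | rfl
      · left; rfl
      · right; simp [sub_eq_add_neg]
    have s2 : blackLeft (u.1 + e1, u.2) (u.1 + e1, u.2 + e2) := by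
      obtain ⟨k, hk⟩ := ho
      refine Or.inr ⟨?_, ?_⟩
      · rcases h1 with rfl | rfl
        · exact ⟨k + 1, by omega⟩
        · exact ⟨k, by omega⟩
      · rcases h2 with rfl | rfl
        · left; rfl
        · right; simp [sub_eq_add_neg]
    have := mem_add (mem_one s1) (mem_one s2)
    simpa using this

lemma sign_exists (a : ℤ) (k : ℕ) (h : a.natAbs ≤ k + 1)
    (hp : a % 2 = ((k : ℤ) + 1) % 2) :
    ∃ e : ℤ, (e = 1 ∨ e = -1) ∧ (a - e).natAbs ≤ k ∧ (a - e) % 2 = (k : ℤ) % 2 := by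
  rcases le_or_gt a 0 with h' | h'
  · exact ⟨-1, Or.inr rfl, by omega, by omega⟩
  · exact ⟨1, Or.inl rfl, by omega, by omega⟩

lemma diag_reach : ∀ (k : ℕ) (u : ℤ × ℤ) (a b : ℤ), a.natAbs ≤ k → b.natAbs ≤ k →
    a % 2 = (k : ℤ) % 2 → b % 2 = (k : ℤ) % 2 →
    2 * k ∈ incPathLengths u (u.1 + a, u.2 + b) := by
  intro k
  induction k with
  | zero =>
    intro u a b ha hb hpa hpb
    have h1 : a = 0 := by omega
    have h2 : b = 0 := by omega
    subst h1; subst h2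
    rw [show ((u.1 + 0, u.2 + 0) : ℤ × ℤ) = u from by simp]
    exact mem_zero u
  | succ k ih =>
    intro u a b ha hb hpa hpb
    obtain ⟨e1, he1, ha', hpa'⟩ := sign_exists a k ha (by push_cast at hpa ⊢; omega)
    obtain ⟨e2, he2, hb', hpb'⟩ := sign_exists b k hb (by push_cast at hpb ⊢; omega)
    have step := mem_diag u e1 e2 he1 he2
    have rest := ih (u.1 + e1, u.2 + e2) (a - e1) (b - e2) ha' hb' hpa' hpb'
    have hpt : ((u.1 + e1, u.2 + e2).1 + (a - e1), (u.1 + e1, u.2 + e2).2 + (b - e2))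
        = (u.1 + a, u.2 + b) := by
      simp only [Prod.mk.injEq]; constructor <;> ring
    rw [hpt] at rest
    have := mem_add step rest
    rw [show 2 * (k + 1) = 2 + 2 * k from by ring]
    exact this

lemma sign_exists' (b : ℤ) (d : ℕ) (hb : b.natAbs ≤ d) (hd : 1 ≤ d) :
    ∃ e : ℤ, (e = 1 ∨ e = -1) ∧ (b - e).natAbs ≤ d := by
  rcases le_or_gt b 0 with h' | h'
  · exact ⟨-1, Or.inr rfl, by omega⟩
  · exact ⟨1, Or.inl rfl, by omega⟩

lemma upper (u v : ℤ × ℤ) : ∃ n ∈ incPathLengths u v,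
    n ≤ 2 * max (v.1 - u.1).natAbs (v.2 - u.2).natAbs + 1 := by
  set a := v.1 - u.1 with haa
  set b := v.2 - u.2 with hbb
  have hv : v = (u.1 + a, u.2 + b) := by
    rw [haa, hbb]; simp
  by_cases hpar : (a + b) % 2 = 0
  · -- even case: pure diagonal path of length 2d
    set d := max a.natAbs b.natAbs with hd
    have hpa : a % 2 = (d : ℤ) % 2 := by
      rcases le_total a.natAbs b.natAbs with h | h
      · rw [hd, max_eq_right h]; omega
      · rw [hd, max_eq_left h]; omega
    have hpb : b % 2 = (d : ℤ) % 2 := by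
      rcases le_total a.natAbs b.natAbs with h | h
      · rw [hd, max_eq_right h]; omega
      · rw [hd, max_eq_left h]; omega
    have := diag_reach d u a b (le_max_left _ _) (le_max_right _ _) hpa hpb
    rw [← hv] at this
    exact ⟨2 * d, this, by omega⟩
  · set d := max a.natAbs b.natAbs with hd
    have hd1 : 1 ≤ d := by
      rcases le_total a.natAbs b.natAbs with h | h <;> omega
    rcases Int.even_or_odd (u.1 + u.2) with he | ho
    · -- first step vertical
      obtain ⟨e2, he2, hb'⟩ := sign_exists' b d (le_max_right _ _) hd1
      have s1 : blackLeft u (u.1, u.2 + e2) := by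
        refine Or.inr ⟨he, ?_⟩
        rcases he2 with rfl | rfl
        · left; rfl
        · right; simp [sub_eq_add_neg]
      set k := max a.natAbs (b - e2).natAbs with hk
      have hpa : a % 2 = (k : ℤ) % 2 := by
        rcases le_total a.natAbs (b - e2).natAbs with h | h
        · rw [hk, max_eq_right h]; rcases he2 with rfl | rfl <;> omega
        · rw [hk, max_eq_left h]; omega
      have hpb : (b - e2) % 2 = (k : ℤ) % 2 := by
        rcases le_total a.natAbs (b - e2).natAbs with h | h
        · rw [hk, max_eq_right h]; omega
        · rw [hk, max_eq_left h]; rcases he2 with rfl | rfl <;> omega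
      have rest := diag_reach k (u.1, u.2 + e2) a (b - e2)
        (le_max_left _ _) (le_max_right _ _) hpa hpb
      have hpt : (((u.1, u.2 + e2) : ℤ × ℤ).1 + a, ((u.1, u.2 + e2) : ℤ × ℤ).2 + (b - e2)) = v := by
        rw [hv]; simp only [Prod.mk.injEq]; exact ⟨trivial, by ring⟩
      rw [hpt] at rest
      have hmem := mem_add (mem_one s1) rest
      refine ⟨1 + 2 * k, hmem, ?_⟩
      have hkd : k ≤ d := by
        rcases le_total a.natAbs (b - e2).natAbs with h | h
        · rw [hk, max_eq_right h]; omega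
        · rw [hk, max_eq_left h]; exact le_max_left _ _
      omega
    · -- first step horizontal
      obtain ⟨e1, he1, ha'⟩ := sign_exists' a d (le_max_left _ _) hd1
      have s1 : blackLeft u (u.1 + e1, u.2) := by
        refine Or.inl ⟨ho, ?_⟩
        rcases he1 with rfl | rfl
        · left; rfl
        · right; simp [sub_eq_add_neg]
      set k := max (a - e1).natAbs b.natAbs with hk
      have hpa : (a - e1) % 2 = (k : ℤ) % 2 := by
        rcases le_total (a - e1).natAbs b.natAbs with h | h
        · rw [hk, max_eq_right h]; rcases he1 with rfl | rfl <;> omega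
        · rw [hk, max_eq_left h]; omega
      have hpb : b % 2 = (k : ℤ) % 2 := by
        rcases le_total (a - e1).natAbs b.natAbs with h | h
        · rw [hk, max_eq_right h]; omega
        · rw [hk, max_eq_left h]; rcases he1 with rfl | rfl <;> omega
      have rest := diag_reach k (u.1 + e1, u.2) (a - e1) b
        (le_max_left _ _) (le_max_right _ _) hpa hpb
      have hpt : (((u.1 + e1, u.2) : ℤ × ℤ).1 + (a - e1), ((u.1 + e1, u.2) : ℤ × ℤ).2 + b) = v := by
        rw [hv]; simp only [Prod.mk.injEq]; exact ⟨by ring, trivial⟩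
      rw [hpt] at rest
      have hmem := mem_add (mem_one s1) rest
      refine ⟨1 + 2 * k, hmem, ?_⟩
      have hkd : k ≤ d := by
        rcases le_total (a - e1).natAbs b.natAbs with h | h
        · rw [hk, max_eq_right h]; exact le_max_right _ _
        · rw [hk, max_eq_left h]; omega
      omega

lemma one_step {u v : ℤ × ℤ} (h : blackLeft u v) :
    (v.1 - u.1).natAbs ≤ 1 ∧ (v.2 - u.2).natAbs ≤ 1 := by
  rcases h with ⟨_, rfl | rfl⟩ | ⟨_, rfl | rfl⟩ <;> simp

lemma two_step (a b c : ℤ × ℤ) (h1 : blackLeft a b) (h2 : blackLeft b c) :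
    (c.1 - a.1).natAbs ≤ 1 ∧ (c.2 - a.2).natAbs ≤ 1 := by
  rcases h1 with ⟨⟨k, hk⟩, rfl | rfl⟩ | ⟨⟨k, hk⟩, rfl | rfl⟩ <;>
    rcases h2 with ⟨⟨m, hm⟩, rfl | rfl⟩ | ⟨⟨m, hm⟩, rfl | rfl⟩ <;>
    simp_all <;> omega

lemma lb : ∀ n : ℕ, ∀ u v : ℤ × ℤ, n ∈ incPathLengths u v →
    2 * (v.1 - u.1).natAbs ≤ n + 1 ∧ 2 * (v.2 - u.2).natAbs ≤ n + 1 := by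
  intro n
  induction n using Nat.strong_induction_on with
  | _ n ih =>
    intro u v h
    obtain ⟨p, h0, hn, hs⟩ := h
    match n with
    | 0 =>
      have : v = u := by rw [← hn, h0]
      subst this; simp
    | 1 =>
      have h01 : blackLeft u v := by
        rw [← h0, ← hn]; exact hs 0 (by omega)
      have := one_step h01
      omega
    | (m + 2) =>
      have hmem : m ∈ incPathLengths (p 2) v :=
        ⟨fun i => p (i + 2), rfl, hn, fun i hi => hs (i + 2) (by omega)⟩
      have h2 := ih m (by omega) _ _ hmem
      have hts := two_step u (p 1) (p 2) (by rw [← h0]; exact hs 0 (by omega))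
        (hs 1 (by omega))
      constructor <;> omega

/-- The minimal length of an increasing lattice path between two lattice
points differs by at most `1` from twice the sup-norm distance between them. -/
theorem min_increasing_path_length (u v : ℤ × ℤ) :
    (incPathLengths u v).Nonempty ∧
    |((sInf (incPathLengths u v) : ℕ) : ℤ) -
        2 * max (|u.1 - v.1|) (|u.2 - v.2|)| ≤ 1 := by
  obtain ⟨n, hn, hle⟩ := upper u v
  have hne : (incPathLengths u v).Nonempty := ⟨n, hn⟩
  refine ⟨hne, ?_⟩
  have hinf_le : sInf (incPathLengths u v) ≤ n := Nat.sInf_le hn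
  have hmem := Nat.sInf_mem hne
  have hlb := lb _ u v hmem
  have key : max (|u.1 - v.1|) (|u.2 - v.2|)
      = ((max (v.1 - u.1).natAbs (v.2 - u.2).natAbs : ℕ) : ℤ) := by
    rw [Nat.cast_max]
    congr 1 <;> rw [Int.abs_eq_natAbs] <;> omega
  rw [key, abs_le]
  have h2d : 2 * max (v.1 - u.1).natAbs (v.2 - u.2).natAbs
      ≤ sInf (incPathLengths u v) + 1 := by
    rcases le_total (v.1 - u.1).natAbs (v.2 - u.2).natAbs with h | h
    · rw [max_eq_right h]; exact hlb.2
    · rw [max_eq_left h]; exact hlb.1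
  set D := max (v.1 - u.1).natAbs (v.2 - u.2).natAbs with hD
  constructor <;> push_cast <;> omega
end

section
/- Let θ0 ∈ (0,π) with θ0 ≠ π/2, and for each positive integer n let W be the set of n such that |θ0 - πj/n| > n^{-3/2} for all integers j. Then for all sufficiently large even n, at least one of n, n+2 belongs to W. -/
open Real

/-- The set of "good denominators" for `θ₀`: those `n` for which `θ₀/π` is
not well approximated by rationals with denominator `n`, in the sense that
`|θ₀ - πj/n| > n^(-3/2)` for every integer `j`. -/
def goodDenoms (θ₀ : ℝ) : Set ℕ :=
  {n | 0 < n ∧ ∀ j : ℤ, |θ₀ - π * j / n| > 1 / (n : ℝ) ^ ((3 : ℝ) / 2)}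

/-- Lemma `halfin`:  for `θ₀ ∈ (0, π)` with `θ₀ ≠ π/2`, for every
sufficiently large even `n`, at least one of `n`, `n + 2` is a good
denominator for `θ₀`. -/
theorem halfin (θ₀ : ℝ) (h₀ : θ₀ ∈ Set.Ioo 0 π) (hhalf : θ₀ ≠ π / 2) :
    ∃ N : ℕ, ∀ n ≥ N, Even n →
      n ∈ goodDenoms θ₀ ∨ n + 2 ∈ goodDenoms θ₀ := by
  obtain ⟨hθ0, hθπ⟩ := h₀
  have hπ := Real.pi_pos
  set δ : ℝ := min (min (2*θ₀) (2*π - 2*θ₀)) |2*θ₀ - π| with hδ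
  have hδpos : 0 < δ := by
    refine lt_min (lt_min (by linarith) (by linarith)) ?_
    rw [abs_pos]
    intro h
    exact hhalf (by linarith)
  have key : ∀ k : ℤ, δ ≤ |2*θ₀ - π * k| := by
    intro k
    rcases le_or_gt k 0 with hk | hk
    · have hk' : (k : ℝ) ≤ 0 := by exact_mod_cast hk
      have h1 : π * k ≤ 0 := mul_nonpos_of_nonneg_of_nonpos hπ.le hk'
      rw [abs_of_pos (by linarith)]
      have hA : δ ≤ min (2*θ₀) (2*π - 2*θ₀) := min_le_left _ _
      have hB := min_le_left (2*θ₀) (2*π - 2*θ₀)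
      have := le_trans hA hB
      linarith
    · rcases eq_or_lt_of_le (show (1:ℤ) ≤ k from hk) with hk1 | hk2
      · have : (k : ℝ) = 1 := by exact_mod_cast hk1.symm
        rw [this, mul_one]
        exact min_le_right _ _
      · have hk' : (2 : ℝ) ≤ k := by exact_mod_cast hk2
        have h1 : 2 * π ≤ π * k := by nlinarith
        rw [abs_of_neg (by linarith), neg_sub]
        have h2 : δ ≤ 2*π - 2*θ₀ :=
          le_trans (min_le_left _ _) (min_le_right (2*θ₀) (2*π - 2*θ₀))
        linarith
  refine ⟨⌈(2/δ)^2⌉₊ + 1, fun n hn _ => ?_⟩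
  by_contra hcon
  push_neg at hcon
  obtain ⟨h1, h2⟩ := hcon
  simp only [goodDenoms, Set.mem_setOf_eq, not_and, not_forall, not_lt] at h1 h2
  have hn1 : 1 ≤ n := le_trans (Nat.le_add_left 1 _) hn
  have hnpos : (0:ℝ) < n := by exact_mod_cast hn1
  have hn2pos : (0:ℝ) < (n:ℝ) + 2 := by linarith
  obtain ⟨j, hj⟩ := h1 hn1
  obtain ⟨j', hj'⟩ := h2 (by omega)
  -- rewrite the rpow
  have hpow : ∀ x : ℝ, 0 ≤ x → x ^ ((3:ℝ)/2) = x * Real.sqrt x := by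
    intro x hx
    rw [show ((3:ℝ)/2) = 1 + 1/2 by norm_num, Real.rpow_add' hx (by norm_num),
      Real.rpow_one, ← Real.sqrt_eq_rpow]
  have hs : 0 < Real.sqrt n := Real.sqrt_pos.mpr hnpos
  have hs2 : 0 < Real.sqrt ((n:ℝ)+2) := Real.sqrt_pos.mpr hn2pos
  -- bound 1: |n θ₀ - π j| ≤ 1/√n
  have b1 : |(n:ℝ) * θ₀ - π * j| ≤ 1 / Real.sqrt n := by
    have e2 : (n:ℝ) * (θ₀ - π * j / n) = (n:ℝ) * θ₀ - π * j := by field_simp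
    have e : |(n:ℝ) * θ₀ - π * j| = (n:ℝ) * |θ₀ - π * j / n| := by
      rw [← e2, abs_mul, abs_of_pos hnpos]
    rw [e, hpow _ hnpos.le] at *
    rw [div_mul_eq_div_div] at hj
    calc (n:ℝ) * |θ₀ - π * j / n| ≤ (n:ℝ) * (1 / n / Real.sqrt n) := by
          exact mul_le_mul_of_nonneg_left hj hnpos.le
      _ = 1 / Real.sqrt n := by field_simp
  have hc : (((n+2:ℕ)):ℝ) = (n:ℝ)+2 := by push_cast; ring
  rw [hc] at hj'
  have b2 : |((n:ℝ)+2) * θ₀ - π * j'| ≤ 1 / Real.sqrt ((n:ℝ)+2) := by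
    have e2 : ((n:ℝ)+2) * (θ₀ - π * j' / ((n:ℝ)+2)) = ((n:ℝ)+2) * θ₀ - π * j' := by
      field_simp
    have e : |((n:ℝ)+2) * θ₀ - π * j'| = ((n:ℝ)+2) * |θ₀ - π * j' / ((n:ℝ)+2)| := by
      rw [← e2, abs_mul, abs_of_pos hn2pos]
    rw [e, hpow _ hn2pos.le, div_mul_eq_div_div] at *
    calc ((n:ℝ)+2) * |θ₀ - π * j' / ((n:ℝ)+2)| ≤ ((n:ℝ)+2) * (1 / ((n:ℝ)+2) / Real.sqrt ((n:ℝ)+2)) :=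
          mul_le_mul_of_nonneg_left hj' hn2pos.le
      _ = 1 / Real.sqrt ((n:ℝ)+2) := by field_simp
  -- combine
  have comb : |2*θ₀ - π * ((j' - j : ℤ) : ℝ)| ≤ 2 / Real.sqrt n := by
    have e : 2*θ₀ - π * ((j' - j : ℤ) : ℝ) =
        (((n:ℝ)+2) * θ₀ - π * j') - ((n:ℝ) * θ₀ - π * j) := by
      push_cast; ring
    rw [e]
    have hle : 1 / Real.sqrt ((n:ℝ)+2) ≤ 1 / Real.sqrt n := by
      apply one_div_le_one_div_of_le hs
      exact Real.sqrt_le_sqrt (by linarith)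
    calc |(((n:ℝ)+2) * θ₀ - π * j') - ((n:ℝ) * θ₀ - π * j)|
        ≤ |((n:ℝ)+2) * θ₀ - π * j'| + |(n:ℝ) * θ₀ - π * j| := abs_sub _ _
      _ ≤ 1 / Real.sqrt ((n:ℝ)+2) + 1 / Real.sqrt n := add_le_add b2 b1
      _ ≤ 2 / Real.sqrt n := by
          have h2s : 2 / Real.sqrt n = 1 / Real.sqrt n + 1 / Real.sqrt n := by ring
          linarith
  -- final contradiction
  have hN : ((2/δ)^2 : ℝ) < n := by
    have := Nat.le_ceil ((2/δ)^2 : ℝ)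
    have h' : (⌈(2/δ)^2⌉₊ + 1 : ℕ) ≤ n := hn
    have : ((⌈(2/δ)^2⌉₊ : ℕ) : ℝ) + 1 ≤ n := by exact_mod_cast h'
    linarith [Nat.le_ceil ((2/δ)^2 : ℝ)]
  have hsqrtN : 2/δ < Real.sqrt n := by
    have h0 : (0:ℝ) ≤ 2/δ := by positivity
    calc 2/δ = Real.sqrt ((2/δ)^2) := (Real.sqrt_sq h0).symm
      _ < Real.sqrt n := Real.sqrt_lt_sqrt (by positivity) hN
  have hfin : 2 / Real.sqrt n < δ := by
    rw [div_lt_iff₀ hs]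
    have : δ * (2/δ) < δ * Real.sqrt n := by
      exact mul_lt_mul_of_pos_left hsqrtN hδpos
    rw [mul_div_cancel₀ _ (ne_of_gt hδpos)] at this
    linarith
  exact absurd (le_trans (key (j' - j)) comb) (not_le.mpr hfin)
end

section
/- Let a, c, b, d be the side lengths (in cyclic order a, c, b, d) of a cyclic quadrilateral, with each of a,b,c,d less than the sum of the other three. Then the circumradius r satisfies r^2 = (ab+cd)(ac+bd)(ad+bc) / ((a+b+c-d)(a+b-c+d)(a-b+c+d)(-a+b+c+d)). -/
open Complex

lemma key_alg (sx cx sy cy sz cz : ℝ) (hx : sx^2 + cx^2 = 1) (hy : sy^2 + cy^2 = 1)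
    (hz : sz^2 + cz^2 = 1) :
    4 * ((sx * sy + sz * (sx*cy*cz + cx*sy*cz + cx*cy*sz - sx*sy*sz)) *
         (sx * sz + sy * (sx*cy*cz + cx*sy*cz + cx*cy*sz - sx*sy*sz)) *
         (sx * (sx*cy*cz + cx*sy*cz + cx*cy*sz - sx*sy*sz) + sy * sz)) =
    (sx + sy + sz - (sx*cy*cz + cx*sy*cz + cx*cy*sz - sx*sy*sz)) *
    (sx + sy - sz + (sx*cy*cz + cx*sy*cz + cx*cy*sz - sx*sy*sz)) *
    (sx - sy + sz + (sx*cy*cz + cx*sy*cz + cx*cy*sz - sx*sy*sz)) *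
    (-sx + sy + sz + (sx*cy*cz + cx*sy*cz + cx*cy*sz - sx*sy*sz)) := by
  linear_combination ((-2)*cy^2*sz^4 + (1)*cy^4*sz^4 + (-4)*sy*cy*sz^3*cz + (4)*sy*cy^3*sz^3*cz + (-2)*sy^2*sz^2*cz^2 + (-2)*sy^2*cy^2*sz^2 + (6)*sy^2*cy^2*sz^2*cz^2 + (4)*sy^2*cy^2*sz^4 + (-4)*sy^3*cy*sz*cz + (4)*sy^3*cy*sz*cz^3 + (8)*sy^3*cy*sz^3*cz + (-2)*sy^4*cz^2 + (1)*sy^4*cz^4 + (4)*sy^4*sz^2*cz^2 + (1)*cx^2*cy^4*sz^4 + (4)*cx^2*sy*cy^3*sz^3*cz + (6)*cx^2*sy^2*cy^2*sz^2*cz^2 + (4)*cx^2*sy^3*cy*sz*cz^3 + (1)*cx^2*sy^4*cz^4 + (4)*sx*cx*cy^4*sz^3*cz + (12)*sx*cx*sy*cy^3*sz^2*cz^2 + (12)*sx*cx*sy^2*cy^2*sz*cz^3 + (4)*sx*cx*sy^3*cy*cz^4 + (-2)*sx^2*cy^2*sz^2 + (4)*sx^2*cy^2*sz^4 + (6)*sx^2*cy^4*sz^2*cz^2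 + (-1)*sx^2*cy^4*sz^4 + (-4)*sx^2*sy*cy*sz*cz + (8)*sx^2*sy*cy*sz^3*cz + (12)*sx^2*sy*cy^3*sz*cz^3 + (-4)*sx^2*sy*cy^3*sz^3*cz + (-2)*sx^2*sy^2*cz^2 + (4)*sx^2*sy^2*sz^2*cz^2 + (6)*sx^2*sy^2*cy^2*cz^4 + (4)*sx^2*sy^2*cy^2*sz^2 + (-6)*sx^2*sy^2*cy^2*sz^2*cz^2 + (-6)*sx^2*sy^2*cy^2*sz^4 + (8)*sx^2*sy^3*cy*sz*cz + (-4)*sx^2*sy^3*cy*sz*cz^3 + (-12)*sx^2*sy^3*cy*sz^3*cz + (4)*sx^2*sy^4*cz^2 + (-1)*sx^2*sy^4*cz^4 + (-6)*sx^2*sy^4*sz^2*cz^2) * hx + ((-1)*sz^4 + (1)*cy^2*sz^4 + (4)*sy*cy*sz^3*cz + (-2)*sy^2*sz^2 + (6)*sy^2*sz^2*cz^2 + (3)*sy^2*sz^4 + (4)*sx*cx*cy^2*sz^3*cz + (12)*sx*cx*sy*cy*sz^2*cz^2 + (-4)*sx*cx*sy^2*sz*cz + (12)*sx*cx*sy^2*sz*cz^3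 + (4)*sx*cx*sy^2*sz^3*cz + (-2)*sx^2*sz^2 + (4)*sx^2*sz^2*cz^2 + (4)*sx^2*sz^4 + (6)*sx^2*cy^2*sz^2*cz^2 + (-2)*sx^2*cy^2*sz^4 + (12)*sx^2*sy*cy*sz*cz^3 + (-8)*sx^2*sy*cy*sz^3*cz + (-2)*sx^2*sy^2*cz^2 + (6)*sx^2*sy^2*cz^4 + (6)*sx^2*sy^2*sz^2 + (-14)*sx^2*sy^2*sz^2*cz^2 + (-8)*sx^2*sy^2*sz^4 + (-4)*sx^3*cx*sz*cz + (4)*sx^3*cx*sz*cz^3 + (4)*sx^3*cx*sz^3*cz + (4)*sx^3*cx*cy^2*sz*cz^3 + (-4)*sx^3*cx*cy^2*sz^3*cz + (4)*sx^3*cx*sy*cy*cz^4 + (-12)*sx^3*cx*sy*cy*sz^2*cz^2 + (8)*sx^3*cx*sy^2*sz*cz + (-16)*sx^3*cx*sy^2*sz*cz^3 + (-8)*sx^3*cx*sy^2*sz^3*cz + (-2)*sx^4*cz^2 + (1)*sx^4*cz^4 + (2)*sx^4*sz^2 + (-2)*sx^4*sz^2*cz^2 + (-3)*sx^4*sz^4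 + (1)*sx^4*cy^2*cz^4 + (-6)*sx^4*cy^2*sz^2*cz^2 + (1)*sx^4*cy^2*sz^4 + (-12)*sx^4*sy*cy*sz*cz^3 + (4)*sx^4*sy*cy*sz^3*cz + (4)*sx^4*sy^2*cz^2 + (-7)*sx^4*sy^2*cz^4 + (-4)*sx^4*sy^2*sz^2 + (6)*sx^4*sy^2*sz^2*cz^2 + (5)*sx^4*sy^2*sz^4) * hy + ((4)*sy^2*sz^2 + (4)*sy^3*cy*sz*cz + (-1)*sy^4 + (1)*sy^4*cz^2 + (-3)*sy^4*sz^2 + (8)*sx*cx*sy*cy*sz^2 + (12)*sx*cx*sy^2*sz*cz + (4)*sx*cx*sy^3*cy*cz^2 + (-8)*sx*cx*sy^3*cy*sz^2 + (-12)*sx*cx*sy^4*sz*cz + (4)*sx^2*sz^2 + (12)*sx^2*sy*cy*sz*cz + (2)*sx^2*sy^2 + (6)*sx^2*sy^2*cz^2 + (-18)*sx^2*sy^2*sz^2 + (-20)*sx^2*sy^3*cy*sz*cz + (-8)*sx^2*sy^4*cz^2 + (12)*sx^2*sy^4*sz^2 + (4)*sx^3*cx*sz*cz + (4)*sx^3*cx*sy*cy*cz^2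 + (-8)*sx^3*cx*sy*cy*sz^2 + (-20)*sx^3*cx*sy^2*sz*cz + (-8)*sx^3*cx*sy^3*cy*cz^2 + (8)*sx^3*cx*sy^3*cy*sz^2 + (16)*sx^3*cx*sy^4*sz*cz + (-1)*sx^4 + (1)*sx^4*cz^2 + (-3)*sx^4*sz^2 + (-12)*sx^4*sy*cy*sz*cz + (-8)*sx^4*sy^2*cz^2 + (12)*sx^4*sy^2*sz^2 + (16)*sx^4*sy^3*cy*sz*cz + (8)*sx^4*sy^4*cz^2 + (-8)*sx^4*sy^4*sz^2) * hz
lemma abs_exp_mul_I_sub_one (ψ : ℝ) :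
    ‖Complex.exp (ψ * Complex.I) - 1‖ = 2 * |Real.sin (ψ / 2)| := by
  have h1 : ‖Complex.exp (ψ * Complex.I) - 1‖
      = Real.sqrt ((Real.cos ψ - 1)^2 + (Real.sin ψ)^2) := by
    rw [Complex.norm_def, Complex.normSq_apply]
    simp [Complex.exp_ofReal_mul_I_re, Complex.exp_ofReal_mul_I_im]
    ring_nf
  have h2 : (Real.cos ψ - 1)^2 + (Real.sin ψ)^2 = (2 * |Real.sin (ψ / 2)|)^2 := by
    have hs : Real.sin (ψ/2) ^ 2 = 1/2 - Real.cos ψ / 2 := by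
      have := Real.sin_sq_eq_half_sub (ψ/2)
      rwa [show 2 * (ψ/2) = ψ by ring] at this
    have hp := Real.sin_sq_add_cos_sq ψ
    have : (2 * |Real.sin (ψ / 2)|)^2 = 4 * (Real.sin (ψ/2))^2 := by
      rw [mul_pow, _root_.sq_abs]; norm_num
    rw [this, hs]; nlinarith [hp]
  rw [h1, h2, Real.sqrt_sq (by positivity)]

lemma chord (r θ φ : ℝ) (hr : 0 ≤ r) (o : ℂ) :
    ‖o + r * Complex.exp (φ * Complex.I) -
      (o + r * Complex.exp (θ * Complex.I))‖ = 2 * r * |Real.sin ((φ - θ) / 2)| := by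
  have key : o + (r : ℂ) * Complex.exp (φ * Complex.I) -
      (o + r * Complex.exp (θ * Complex.I))
      = (r : ℂ) * Complex.exp (θ * Complex.I) * (Complex.exp ((↑(φ - θ)) * Complex.I) - 1) := by
    rw [mul_sub, mul_one, mul_assoc, ← Complex.exp_add]
    push_cast
    ring_nf
  rw [key, norm_mul, norm_mul, Complex.norm_exp_ofReal_mul_I]
  rw [abs_exp_mul_I_sub_one, Complex.norm_real, Real.norm_eq_abs, _root_.abs_of_nonneg hr]
  ring

/-- Circumradius of a cyclic quadrilateral:  if four points lie in cyclic
order on a circle of radius `r` (centre `o`), with consecutive side lengths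
`a, c, b, d`, and each of `a, b, c, d` is less than the sum of the other
three, then
`r² = (ab+cd)(ac+bd)(ad+bc) / ((a+b+c-d)(a+b-c+d)(a-b+c+d)(-a+b+c+d))`. -/
theorem cyclic_quadrilateral_circumradius (a b c d r : ℝ) (o : ℂ)
    (θ : Fin 4 → ℝ)
    (hr : 0 < r)
    (ha : 0 < a) (hb : 0 < b) (hc : 0 < c) (hd : 0 < d)
    (h₁ : a < b + c + d) (h₂ : b < a + c + d)
    (h₃ : c < a + b + d) (h₄ : d < a + b + c)
    (horder : θ 0 < θ 1 ∧ θ 1 < θ 2 ∧ θ 2 < θ 3 ∧ θ 3 < θ 0 + 2 * Real.pi)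
    (hside_a : Norm.norm (o + r * Complex.exp (θ 1 * Complex.I) -
      (o + r * Complex.exp (θ 0 * Complex.I))) = a)
    (hside_c : Norm.norm (o + r * Complex.exp (θ 2 * Complex.I) -
      (o + r * Complex.exp (θ 1 * Complex.I))) = c)
    (hside_b : Norm.norm (o + r * Complex.exp (θ 3 * Complex.I) -
      (o + r * Complex.exp (θ 2 * Complex.I))) = b)
    (hside_d : Norm.norm (o + r * Complex.exp (θ 0 * Complex.I) -
      (o + r * Complex.exp (θ 3 * Complex.I))) = d) :
    r ^ 2 = (a * b + c * d) * (a * c + b * d) * (a * d + b * c) /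
      ((a + b + c - d) * (a + b - c + d) * (a - b + c + d) *
        (-a + b + c + d)) := by
  obtain ⟨h01, h12, h23, h30⟩ := horder
  set x := (θ 1 - θ 0) / 2 with hxdef
  set z := (θ 2 - θ 1) / 2 with hzdef
  set y := (θ 3 - θ 2) / 2 with hydef
  have hπ := Real.pi_pos
  have hx0 : 0 < x := by simp [hxdef]; linarith
  have hz0 : 0 < z := by simp [hzdef]; linarith
  have hy0 : 0 < y := by simp [hydef]; linarith
  have hxyz : x + y + z < Real.pi := by simp [hxdef, hydef, hzdef]; linarith
  have hsx : 0 < Real.sin x := Real.sin_pos_of_pos_of_lt_pi hx0 (by linarith)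
  have hsy : 0 < Real.sin y := Real.sin_pos_of_pos_of_lt_pi hy0 (by linarith)
  have hsz : 0 < Real.sin z := Real.sin_pos_of_pos_of_lt_pi hz0 (by linarith)
  have hsw : 0 < Real.sin (x + y + z) :=
    Real.sin_pos_of_pos_of_lt_pi (by linarith) hxyz
  have hA : a = 2 * r * Real.sin x := by
    rw [← hside_a, chord r (θ 0) (θ 1) hr.le o, ← hxdef, abs_of_pos hsx]
  have hC : c = 2 * r * Real.sin z := by
    rw [← hside_c, chord r (θ 1) (θ 2) hr.le o, ← hzdef, abs_of_pos hsz]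
  have hB : b = 2 * r * Real.sin y := by
    rw [← hside_b, chord r (θ 2) (θ 3) hr.le o, ← hydef, abs_of_pos hsy]
  have hD : d = 2 * r * Real.sin (x + y + z) := by
    have h : (θ 0 - θ 3) / 2 = -(x + y + z) := by
      simp [hxdef, hydef, hzdef]; ring
    rw [← hside_d, chord r (θ 3) (θ 0) hr.le o, h, Real.sin_neg, abs_neg,
      abs_of_pos hsw]
  have hWexp : Real.sin (x + y + z) =
      Real.sin x * Real.cos y * Real.cos z + Real.cos x * Real.sin y * Real.cos z +
        Real.cos x * Real.cos y * Real.sin z - Real.sin x * Real.sin y * Real.sin z := by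
    rw [Real.sin_add, Real.sin_add, Real.cos_add]; ring
  have hden : (a + b + c - d) * (a + b - c + d) * (a - b + c + d) *
      (-a + b + c + d) ≠ 0 := by
    have f1 : (0:ℝ) < a + b + c - d := by linarith
    have f2 : (0:ℝ) < a + b - c + d := by linarith
    have f3 : (0:ℝ) < a - b + c + d := by linarith
    have f4 : (0:ℝ) < -a + b + c + d := by linarith
    positivity
  rw [eq_div_iff hden]
  have hkey := key_alg (Real.sin x) (Real.cos x) (Real.sin y) (Real.cos y)
    (Real.sin z) (Real.cos z) (Real.sin_sq_add_cos_sq x) (Real.sin_sq_add_cos_sq y)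
    (Real.sin_sq_add_cos_sq z)
  rw [hA, hB, hC, hD, hWexp]
  linear_combination (-(16 * r ^ 6)) * hkey
end

section
/- For positive reals a, b, c, d with each less than the sum of the other three, let p_a = (1/π)·arcsin( a·√((a+b+c-d)(a+b-c+d)(a-b+c+d)(-a+b+c+d)) / (2·√((ab+cd)(ac+bd)(ad+bc))) ) be the normalized arc angle cut off by side a of the cyclic quadrilateral with sides a,c,b,d in cyclic order, and define p_b, p_c, p_d analogously. Then p_a + p_b + p_c + p_d = 1. -/
open Real

private lemma aux_bnd {K2 P p x R : ℝ} (hK2 : 0 < K2) (hp : 0 < p)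
    (hp2 : p ^ 2 = P) (hx : 0 < x) (key : R ^ 2 + x ^ 2 * K2 = 4 * P) :
    -1 < R / (2*p) ∧ R / (2*p) < 1 := by
  have hsq : R^2 < (2*p)^2 := by nlinarith [mul_pos (mul_pos hx hx) hK2]
  have h1 : -(2*p) < R := by nlinarith
  have h2 : R < 2*p := by nlinarith
  constructor
  · rw [lt_div_iff₀ (by linarith : (0:ℝ) < 2*p)]; linarith
  · rw [div_lt_one (by linarith : (0:ℝ) < 2*p)]; linarith


/-- For positive `a, b, c, d`, each less than the sum of the other three,
there are normalized arc angles `p_a, p_b, p_c, p_d ∈ [0,1]` (the arcs cut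
off by the sides of the cyclic quadrilateral with sides `a, c, b, d` in
cyclic order, with the branch of arcsine determined by the geometry) with
`sin(π p_x) = x·√((a+b+c-d)(a+b-c+d)(a-b+c+d)(-a+b+c+d)) /
  (2√((ab+cd)(ac+bd)(ad+bc)))`
for each `x ∈ {a, b, c, d}`, and `p_a + p_b + p_c + p_d = 1`. -/
theorem arc_probabilities_sum_to_one (a b c d : ℝ)
    (ha : 0 < a) (hb : 0 < b) (hc : 0 < c) (hd : 0 < d)
    (h₁ : a < b + c + d) (h₂ : b < a + c + d)
    (h₃ : c < a + b + d) (h₄ : d < a + b + c) :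
    ∃ pa pb pc pd : ℝ,
      pa ∈ Set.Icc (0 : ℝ) 1 ∧ pb ∈ Set.Icc (0 : ℝ) 1 ∧
      pc ∈ Set.Icc (0 : ℝ) 1 ∧ pd ∈ Set.Icc (0 : ℝ) 1 ∧
      sin (π * pa) = a * Real.sqrt ((a + b + c - d) * (a + b - c + d) *
          (a - b + c + d) * (-a + b + c + d)) /
        (2 * Real.sqrt ((a * b + c * d) * (a * c + b * d) * (a * d + b * c))) ∧
      sin (π * pb) = b * Real.sqrt ((a + b + c - d) * (a + b - c + d) *
          (a - b + c + d) * (-a + b + c + d)) /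
        (2 * Real.sqrt ((a * b + c * d) * (a * c + b * d) * (a * d + b * c))) ∧
      sin (π * pc) = c * Real.sqrt ((a + b + c - d) * (a + b - c + d) *
          (a - b + c + d) * (-a + b + c + d)) /
        (2 * Real.sqrt ((a * b + c * d) * (a * c + b * d) * (a * d + b * c))) ∧
      sin (π * pd) = d * Real.sqrt ((a + b + c - d) * (a + b - c + d) *
          (a - b + c + d) * (-a + b + c + d)) /
        (2 * Real.sqrt ((a * b + c * d) * (a * c + b * d) * (a * d + b * c))) ∧
      pa + pb + pc + pd = 1 := by
  obtain ⟨K2, hK2def⟩ : ∃ x : ℝ,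
      x = (a + b + c - d) * (a + b - c + d) * (a - b + c + d) * (-a + b + c + d) := ⟨_, rfl⟩
  obtain ⟨P, hPdef⟩ : ∃ x : ℝ, x = (a * b + c * d) * (a * c + b * d) * (a * d + b * c) := ⟨_, rfl⟩
  have hK2 : 0 < K2 := by
    rw [hK2def]
    exact mul_pos (mul_pos (mul_pos (by linarith) (by linarith)) (by linarith)) (by linarith)
  have hP : 0 < P := by rw [hPdef]; positivity
  obtain ⟨s, hsdef⟩ : ∃ x : ℝ, x = Real.sqrt K2 := ⟨_, rfl⟩
  obtain ⟨p, hpdef⟩ : ∃ x : ℝ, x = Real.sqrt P := ⟨_, rfl⟩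
  have hs : 0 < s := hsdef ▸ Real.sqrt_pos.mpr hK2
  have hp : 0 < p := hpdef ▸ Real.sqrt_pos.mpr hP
  have hs2 : s ^ 2 = K2 := by rw [hsdef]; exact Real.sq_sqrt hK2.le
  have hp2 : p ^ 2 = P := by rw [hpdef]; exact Real.sq_sqrt hP.le
  obtain ⟨Ra, hRa⟩ : ∃ x : ℝ, x = a * (b^2 + c^2 + d^2 - a^2) + 2*b*c*d := ⟨_, rfl⟩
  obtain ⟨Rb, hRb⟩ : ∃ x : ℝ, x = b * (a^2 + c^2 + d^2 - b^2) + 2*a*c*d := ⟨_, rfl⟩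
  obtain ⟨Rc, hRc⟩ : ∃ x : ℝ, x = c * (a^2 + b^2 + d^2 - c^2) + 2*a*b*d := ⟨_, rfl⟩
  obtain ⟨Rd, hRd⟩ : ∃ x : ℝ, x = d * (a^2 + b^2 + c^2 - d^2) + 2*a*b*c := ⟨_, rfl⟩
  have keya : Ra ^ 2 + a ^ 2 * K2 = 4 * P := by rw [hRa, hK2def, hPdef]; ring
  have keyb : Rb ^ 2 + b ^ 2 * K2 = 4 * P := by rw [hRb, hK2def, hPdef]; ring
  have keyc : Rc ^ 2 + c ^ 2 * K2 = 4 * P := by rw [hRc, hK2def, hPdef]; ring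
  have keyd : Rd ^ 2 + d ^ 2 * K2 = 4 * P := by rw [hRd, hK2def, hPdef]; ring
  have keyab : Ra * Rb + Rc * Rd = (a*b + c*d) * K2 := by
    rw [hRa, hRb, hRc, hRd, hK2def]; ring
  have keyab' : a * Rb + b * Ra = c * Rd + d * Rc := by
    rw [hRa, hRb, hRc, hRd]; ring
  -- bounds on R/(2p)
  have hbnd : ∀ x R : ℝ, 0 < x → R ^ 2 + x ^ 2 * K2 = 4 * P →
      (-1 < R / (2*p) ∧ R / (2*p) < 1) := fun x R hx key => aux_bnd hK2 hp hp2 hx key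
  obtain ⟨hba1, hba2⟩ := hbnd a Ra ha keya
  obtain ⟨hbb1, hbb2⟩ := hbnd b Rb hb keyb
  obtain ⟨hbc1, hbc2⟩ := hbnd c Rc hc keyc
  obtain ⟨hbd1, hbd2⟩ := hbnd d Rd hd keyd
  obtain ⟨A, hA⟩ : ∃ x : ℝ, x = Real.arccos (Ra / (2*p)) := ⟨_, rfl⟩
  obtain ⟨B, hB⟩ : ∃ x : ℝ, x = Real.arccos (Rb / (2*p)) := ⟨_, rfl⟩
  obtain ⟨C, hC⟩ : ∃ x : ℝ, x = Real.arccos (Rc / (2*p)) := ⟨_, rfl⟩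
  obtain ⟨D, hD⟩ : ∃ x : ℝ, x = Real.arccos (Rd / (2*p)) := ⟨_, rfl⟩
  have hcosA : Real.cos A = Ra / (2*p) := hA ▸ Real.cos_arccos hba1.le hba2.le
  have hcosB : Real.cos B = Rb / (2*p) := hB ▸ Real.cos_arccos hbb1.le hbb2.le
  have hcosC : Real.cos C = Rc / (2*p) := hC ▸ Real.cos_arccos hbc1.le hbc2.le
  have hcosD : Real.cos D = Rd / (2*p) := hD ▸ Real.cos_arccos hbd1.le hbd2.le
  -- sin values
  have hsin : ∀ x R : ℝ, 0 < x → R ^ 2 + x ^ 2 * K2 = 4 * P →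
      Real.sin (Real.arccos (R / (2*p))) = x * s / (2*p) := by
    intro x R hx key
    rw [Real.sin_arccos]
    have h1 : 1 - (R / (2*p)) ^ 2 = (x * s / (2*p)) ^ 2 := by
      field_simp
      linear_combination -(x^2)*hs2 + 4*hp2 - key
    rw [h1, Real.sqrt_sq (by positivity)]
  have hsinA : Real.sin A = a * s / (2*p) := hA ▸ hsin a Ra ha keya
  have hsinB : Real.sin B = b * s / (2*p) := hB ▸ hsin b Rb hb keyb
  have hsinC : Real.sin C = c * s / (2*p) := hC ▸ hsin c Rc hc keyc
  have hsinD : Real.sin D = d * s / (2*p) := hD ▸ hsin d Rd hd keyd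
  -- ranges
  have hA0 : 0 ≤ A := hA ▸ Real.arccos_nonneg _
  have hB0 : 0 ≤ B := hB ▸ Real.arccos_nonneg _
  have hC0 : 0 ≤ C := hC ▸ Real.arccos_nonneg _
  have hD0 : 0 ≤ D := hD ▸ Real.arccos_nonneg _
  have hltpi : ∀ y : ℝ, -1 < y → Real.arccos y < π := by
    intro y hy
    refine lt_of_le_of_ne (Real.arccos_le_pi y) (fun h => ?_)
    have := Real.arccos_eq_pi.mp h
    linarith
  have hApi : A < π := hA ▸ hltpi _ hba1
  have hBpi : B < π := hB ▸ hltpi _ hbb1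
  have hCpi : C < π := hC ▸ hltpi _ hbc1
  have hDpi : D < π := hD ▸ hltpi _ hbd1
  -- pair sums of R are positive
  have pairbc : 0 < Rb + Rc := by
    have h : Rb + Rc = (b+c) * (b - c + a + d) * (c - b + a + d) := by rw [hRb, hRc]; ring
    rw [h]; exact mul_pos (mul_pos (by linarith) (by linarith)) (by linarith)
  have pairbd : 0 < Rb + Rd := by
    have h : Rb + Rd = (b+d) * (b - d + a + c) * (d - b + a + c) := by rw [hRb, hRd]; ring
    rw [h]; exact mul_pos (mul_pos (by linarith) (by linarith)) (by linarith)
  have paircd : 0 < Rc + Rd := by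
    have h : Rc + Rd = (c+d) * (c - d + a + b) * (d - c + a + b) := by rw [hRc, hRd]; ring
    rw [h]; exact mul_pos (mul_pos (by linarith) (by linarith)) (by linarith)
  -- at most one of Rb, Rc, Rd is negative, hence sum < 3π
  have hhalf : ∀ R : ℝ, 0 ≤ R → Real.arccos (R / (2*p)) ≤ π / 2 := by
    intro R hR
    exact Real.arccos_le_pi_div_two.mpr (by positivity)
  have hS3 : A + B + C + D < 3 * π := by
    rcases le_or_gt 0 Rb with hRbp | hRbn
    · rcases le_or_gt 0 Rc with hRcp | hRcn
      · have h1 : B ≤ π / 2 := hB ▸ hhalf Rb hRbp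
        have h2 : C ≤ π / 2 := hC ▸ hhalf Rc hRcp
        linarith
      · have hRdp : 0 ≤ Rd := by linarith
        have h1 : B ≤ π / 2 := hB ▸ hhalf Rb hRbp
        have h2 : D ≤ π / 2 := hD ▸ hhalf Rd hRdp
        linarith
    · have hRcp : 0 ≤ Rc := by linarith
      have hRdp : 0 ≤ Rd := by linarith
      have h1 : C ≤ π / 2 := hC ▸ hhalf Rc hRcp
      have h2 : D ≤ π / 2 := hD ▸ hhalf Rd hRdp
      linarith
  -- trig identities
  have hcosAB : Real.cos (A + B) = - Real.cos (C + D) := by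
    rw [Real.cos_add, Real.cos_add, hcosA, hcosB, hcosC, hcosD, hsinA, hsinB, hsinC, hsinD]
    field_simp
    linear_combination keyab - (a*b+c*d)*hs2
  have hsinAB : Real.sin (A + B) = Real.sin (C + D) := by
    rw [Real.sin_add, Real.sin_add, hcosA, hcosB, hcosC, hcosD, hsinA, hsinB, hsinC, hsinD]
    field_simp
    linear_combination keyab'
  have hcosS : Real.cos (A + B + (C + D)) = -1 := by
    rw [Real.cos_add, hcosAB, hsinAB]
    linear_combination - Real.sin_sq_add_cos_sq (C + D)
  have hS : A + B + C + D = π := by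
    have h1 : Real.cos (A + B + (C + D) - π) = 1 := by
      rw [Real.cos_sub_pi, hcosS]; norm_num
    have h2 : A + B + (C + D) - π = 0 := by
      rw [← Real.cos_eq_one_iff_of_lt_of_lt (by linarith [Real.pi_pos]) (by linarith)]
      exact h1
    linarith
  have hfin : ∀ x X : ℝ, Real.sin X = x * s / (2*p) →
      Real.sin (π * (X / π)) = x * Real.sqrt ((a + b + c - d) * (a + b - c + d) *
          (a - b + c + d) * (-a + b + c + d)) /
        (2 * Real.sqrt ((a * b + c * d) * (a * c + b * d) * (a * d + b * c))) := by
    intro x X hX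
    rw [mul_div_cancel₀ _ Real.pi_ne_zero, hX, ← hK2def, ← hPdef, ← hsdef, ← hpdef]
  refine ⟨A / π, B / π, C / π, D / π,
    ⟨div_nonneg hA0 Real.pi_pos.le, (div_le_one Real.pi_pos).mpr hApi.le⟩,
    ⟨div_nonneg hB0 Real.pi_pos.le, (div_le_one Real.pi_pos).mpr hBpi.le⟩,
    ⟨div_nonneg hC0 Real.pi_pos.le, (div_le_one Real.pi_pos).mpr hCpi.le⟩,
    ⟨div_nonneg hD0 Real.pi_pos.le, (div_le_one Real.pi_pos).mpr hDpi.le⟩,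
    hfin a A hsinA, hfin b B hsinB, hfin c C hsinC, hfin d D hsinD, ?_⟩
  field_simp
  linarith
end
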